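/- For every characteristic vector K for M, every E ⊆ V and every framing m₀ ∈ ℤ of v₀, there is a unique characteristic vector L for M' with L restricted to V equal to K and a_{v₀}(L, E∪{v₀}) = b_{v₀}(L, E∪{v₀}) = 0 (computed with respect to M'); explicitly, L(v₀) = −m₀ + 2·g(K,E) − 2·g(K + 2v₀*, E), and this value is congruent to m₀ modulo 2. -/

import Mathlib

open Finset

variable {V : Type*}

/-- `M` is negative definite: `xᵀMx < 0` for every nonzero `x ∈ ℝ^V`. -/
def NegDef [Fintype V] (M : V → V → ℤ) : Prop :=
  ∀ x : V → ℝ, x ≠ 0 → (∑ v, ∑ w, (M v w : ℝ) * x v * x w) < 0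

/-- `K` is a characteristic vector for `M`: `K(v) ≡ v·v (mod 2)` for all `v`. -/
def IsChar (M : V → V → ℤ) (K : V → ℤ) : Prop :=
  ∀ v, Int.ModEq 2 (K v) (M v v)

/-- `f(K, I) = (1/2)(Σ_{v∈I} K(v) + (Σ_{v∈I} v)·(Σ_{v∈I} v))` (an exact integer division
for characteristic `K`). -/
def latF (M : V → V → ℤ) (K : V → ℤ) (I : Finset V) : ℤ :=
  ((∑ v ∈ I, K v) + ∑ v ∈ I, ∑ w ∈ I, M v w) / 2

/-- `g(K, E) = min_{I ⊆ E} f(K, I)`. -/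
def latG (M : V → V → ℤ) (K : V → ℤ) (E : Finset V) : ℤ :=
  (E.powerset.image (latF M K)).min'
    ⟨_, Finset.mem_image_of_mem _ (Finset.empty_mem_powerset E)⟩

/-- `B_v(K, E) = min { f(K, I) : v ∈ I ⊆ E }` (for `v ∈ E`). -/
def latB [DecidableEq V] (M : V → V → ℤ) (K : V → ℤ) (E : Finset V) (v : V) : ℤ :=
  ((E.erase v).powerset.image (fun I => latF M K (insert v I))).min'
    ⟨_, Finset.mem_image_of_mem _ (Finset.empty_mem_powerset _)⟩

/-- `a_v(K,E) = A_v(K,E) - g(K,E) = g(K, E∖{v}) - g(K,E)`. -/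
def lata [DecidableEq V] (M : V → V → ℤ) (K : V → ℤ) (E : Finset V) (v : V) : ℤ :=
  latG M K (E.erase v) - latG M K E

/-- `b_v(K,E) = B_v(K,E) - g(K,E)`. -/
def latb [DecidableEq V] (M : V → V → ℤ) (K : V → ℤ) (E : Finset V) (v : V) : ℤ :=
  latB M K E v - latG M K E

/-- The intersection matrix of the graph obtained by attaching the framing `m₀` to the extra
vertex `v₀ = none`, joined to `G` by the edges recorded by `e`. -/
def Mext (M : V → V → ℤ) (e : V → ℤ) (m₀ : ℤ) : Option V → Option V → ℤ := fun x y =>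
  match x, y with
  | some v, some w => M v w
  | some v, none => e v
  | none, some w => e w
  | none, none => m₀

/-- The coefficients of `Σ = v₀ + Σ_{v∈V} a_v·v`: `a = −M⁻¹e`, the unique solution of
`w·Σ = 0` for all `w ∈ V`. -/
noncomputable def sigmaC [Fintype V] [DecidableEq V] (M : V → V → ℤ) (e : V → ℤ) : V → ℚ :=
  fun v => -∑ u, ((Matrix.of fun a b => (M a b : ℚ))⁻¹ v u) * e u

/-- The rational homology class `Σ = v₀ + Σ_{v∈V} a_v·v` (coordinates). -/
noncomputable def sigmaV [Fintype V] [DecidableEq V] (M : V → V → ℤ) (e : V → ℤ) :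
    Option V → ℚ
  | none => 1
  | some v => sigmaC M e v

/-- The unique characteristic extension `L_{[K,E]}` of `K` over `v₀` (for the framing `m₀`)
with `a_{v₀}(L, E∪{v₀}) = b_{v₀}(L, E∪{v₀}) = 0`:
`L(v₀) = −m₀ + 2g(K,E) − 2g(K+2v₀*,E)`. -/
def LextV [DecidableEq V] (M : V → V → ℤ) (e : V → ℤ) (m₀ : ℤ) (K : V → ℤ) (E : Finset V) :
    Option V → ℤ
  | some v => K v
  | none => -m₀ + 2 * latG M K E - 2 * latG M (fun w => K w + 2 * e w) E

/-- The Alexander grading `A([K,E]) = (1/2)(L_{[K,E]}(Σ) + Σ·Σ)`, computed with the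
framing `m₀` on `v₀`. -/
noncomputable def AlexAt [Fintype V] [DecidableEq V] (M : V → V → ℤ) (e : V → ℤ) (m₀ : ℤ)
    (K : V → ℤ) (E : Finset V) : ℚ :=
  (1 / 2) * ((∑ x : Option V, (LextV M e m₀ K E x : ℚ) * sigmaV M e x)
    + ∑ x : Option V, ∑ y : Option V, (Mext M e m₀ x y : ℚ) * sigmaV M e x * sigmaV M e y)

/-- The Alexander grading `A([K,E])` (independent of the framing; computed with framing `0`). -/
noncomputable def Alex [Fintype V] [DecidableEq V] (M : V → V → ℤ) (e : V → ℤ)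
    (K : V → ℤ) (E : Finset V) : ℚ :=
  AlexAt M e 0 K E

/-- Auxiliary: the (even) numerator of `latF`. -/
private def num (M : V → V → ℤ) (K : V → ℤ) (I : Finset V) : ℤ :=
  (∑ v ∈ I, K v) + ∑ v ∈ I, ∑ w ∈ I, M v w

private lemma latF_eq_num (M : V → V → ℤ) (K : V → ℤ) (I : Finset V) :
    latF M K I = num M K I / 2 := rfl

private lemma num_insert [DecidableEq V] {M : V → V → ℤ} (hsym : ∀ v w, M v w = M w v)
    (K : V → ℤ) {v : V} {I : Finset V} (hv : v ∉ I) :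
    num M K (insert v I) = num M K I + (K v + M v v) + 2 * ∑ w ∈ I, M v w := by
  simp only [num, Finset.sum_insert hv]
  have h1 : ∀ u ∈ I, ∑ w ∈ insert v I, M u w = M v u + ∑ w ∈ I, M u w := fun u _ => by
    rw [Finset.sum_insert hv, hsym u v]
  rw [Finset.sum_add_distrib]
  have h2 : ∑ x ∈ I, M x v = ∑ x ∈ I, M v x := Finset.sum_congr rfl fun x _ => hsym x v
  rw [h2]
  ring

private lemma even_num [DecidableEq V] {M : V → V → ℤ} (hsym : ∀ v w, M v w = M w v)
    {K : V → ℤ} (hK : IsChar M K) (I : Finset V) : Even (num M K I) := by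
  induction I using Finset.induction_on with
  | empty => simp [num]
  | @insert v I hv ih =>
    obtain ⟨r, hr⟩ := ih
    obtain ⟨c, hc⟩ := Int.modEq_iff_dvd.mp (hK v)
    exact ⟨r + K v + c + ∑ w ∈ I, M v w, by rw [num_insert hsym K hv]; omega⟩

private lemma latG_le {M : V → V → ℤ} {K : V → ℤ} {E J : Finset V} (hJ : J ⊆ E) :
    latG M K E ≤ latF M K J :=
  Finset.min'_le _ _ (Finset.mem_image_of_mem _ (Finset.mem_powerset.mpr hJ))

private lemma latG_exists (M : V → V → ℤ) (K : V → ℤ) (E : Finset V) :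
    ∃ J ⊆ E, latG M K E = latF M K J := by
  obtain ⟨J, hJ, h⟩ := Finset.mem_image.mp (Finset.min'_mem _ _ : latG M K E ∈ _)
  exact ⟨J, Finset.mem_powerset.mp hJ, h.symm⟩

private lemma latB_le [DecidableEq V] {M : V → V → ℤ} {K : V → ℤ} {E I : Finset V} {v : V}
    (hI : I ⊆ E.erase v) : latB M K E v ≤ latF M K (insert v I) :=
  Finset.min'_le _ _ (Finset.mem_image_of_mem _ (Finset.mem_powerset.mpr hI))

private lemma latB_exists [DecidableEq V] (M : V → V → ℤ) (K : V → ℤ) (E : Finset V) (v : V) :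
    ∃ I ⊆ E.erase v, latB M K E v = latF M K (insert v I) := by
  obtain ⟨I, hI, h⟩ := Finset.mem_image.mp (Finset.min'_mem _ _ : latB M K E v ∈ _)
  exact ⟨I, Finset.mem_powerset.mp hI, h.symm⟩

private lemma mext_symm {M : V → V → ℤ} (hsym : ∀ v w, M v w = M w v) (e : V → ℤ) (m₀ : ℤ) :
    ∀ x y, Mext M e m₀ x y = Mext M e m₀ y x := by
  rintro (_ | v) (_ | w) <;> simp [Mext, hsym]

private lemma char_shift {M : V → V → ℤ} {K : V → ℤ} (hK : IsChar M K) (e : V → ℤ) :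
    IsChar M (fun w => K w + 2 * e w) := fun w => by
  have h := hK w
  show (K w + 2 * e w) % 2 = M w w % 2
  unfold Int.ModEq at h
  omega

private lemma num_image [DecidableEq V] (M : V → V → ℤ) (e : V → ℤ) (m₀ : ℤ) {K : V → ℤ}
    (L : Option V → ℤ) (hL : ∀ v, L (some v) = K v) (J : Finset V) :
    num (Mext M e m₀) L (J.image some) = num M K J := by
  unfold num
  rw [Finset.sum_image (by simp), Finset.sum_image (by simp)]
  congr 1
  · exact Finset.sum_congr rfl fun v _ => hL v
  · refine Finset.sum_congr rfl fun v _ => ?_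
    rw [Finset.sum_image (by simp)]
    rfl

private lemma num_none [DecidableEq V] {M : V → V → ℤ} (hsym : ∀ v w, M v w = M w v)
    (e : V → ℤ) (m₀ : ℤ) {K : V → ℤ} (L : Option V → ℤ) (hL : ∀ v, L (some v) = K v)
    (J : Finset V) :
    num (Mext M e m₀) L (insert none (J.image some)) =
      (L none + m₀) + num M (fun w => K w + 2 * e w) J := by
  have hn : (none : Option V) ∉ J.image some := by simp
  rw [num_insert (mext_symm hsym e m₀) L hn, num_image M e m₀ L hL J]
  have h2 : ∑ w ∈ J.image some, Mext M e m₀ none w = ∑ v ∈ J, e v := by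
    rw [Finset.sum_image (by simp)]; rfl
  have h3 : num M (fun w => K w + 2 * e w) J = num M K J + 2 * ∑ v ∈ J, e v := by
    unfold num
    rw [Finset.sum_add_distrib,
      show (∑ x ∈ J, 2 * e x) = 2 * ∑ x ∈ J, e x from (Finset.mul_sum _ _ _).symm]
    ring
  have h4 : Mext M e m₀ none none = m₀ := rfl
  rw [h2, h3, h4]
  ring

/-- existence and uniqueness of the characteristic extension `L` of `K` over `v₀`
with `a_{v₀}(L, E∪{v₀}) = b_{v₀}(L, E∪{v₀}) = 0`, its explicit value
`L(v₀) = −m₀ + 2g(K,E) − 2g(K+2v₀*,E)`, and the congruence `L(v₀) ≡ m₀ (mod 2)`. -/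
theorem stmt8 [Fintype V] [DecidableEq V] (M : V → V → ℤ)
    (hsym : ∀ v w, M v w = M w v)
    (hoff : ∀ v w, v ≠ w → M v w = 0 ∨ M v w = 1)
    (hneg : NegDef M)
    (e : V → ℤ) (he : ∀ v, e v = 0 ∨ e v = 1)
    (K : V → ℤ) (hK : IsChar M K) (E : Finset V) (m₀ : ℤ) :
    (∃! L : Option V → ℤ,
        IsChar (Mext M e m₀) L ∧ (∀ v, L (some v) = K v) ∧
        lata (Mext M e m₀) L (insert none (E.image some)) none = 0 ∧
        latb (Mext M e m₀) L (insert none (E.image some)) none = 0) ∧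
    (∀ L : Option V → ℤ,
        IsChar (Mext M e m₀) L → (∀ v, L (some v) = K v) →
        lata (Mext M e m₀) L (insert none (E.image some)) none = 0 →
        latb (Mext M e m₀) L (insert none (E.image some)) none = 0 →
        L none = -m₀ + 2 * latG M K E - 2 * latG M (fun w => K w + 2 * e w) E) ∧
    Int.ModEq 2 (-m₀ + 2 * latG M K E - 2 * latG M (fun w => K w + 2 * e w) E) m₀ := by
  classical
  set M' := Mext M e m₀ with hM'
  set E' := insert (none : Option V) (E.image some) with hE'
  set g : ℤ := latG M K E with hg
  set g' : ℤ := latG M (fun w => K w + 2 * e w) E with hg'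
  have hEr : E'.erase none = E.image some := by
    rw [hE']; exact Finset.erase_insert (by simp)
  have core : ∀ L : Option V → ℤ, IsChar M' L → (∀ v, L (some v) = K v) →
      ∃ q : ℤ, L none + m₀ = 2 * q ∧
        lata M' L E' none = g - min g (q + g') ∧
        latb M' L E' none = (q + g') - min g (q + g') := by
    intro L hL hres
    have hq2 : (2 : ℤ) ∣ L none + m₀ := by
      have h := hL none
      rw [show M' none none = m₀ from rfl] at h
      unfold Int.ModEq at h
      omega
    obtain ⟨q, hq⟩ := hq2
    have hFimg : ∀ J : Finset V, latF M' L (J.image some) = latF M K J := fun J => by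
      rw [latF_eq_num, latF_eq_num, num_image M e m₀ L hres J]
    have hF2 : ∀ J : Finset V, latF M' L (insert none (J.image some)) =
        q + latF M (fun w => K w + 2 * e w) J := fun J => by
      obtain ⟨r, hr⟩ := even_num hsym (char_shift hK e) J
      rw [latF_eq_num, latF_eq_num, num_none hsym e m₀ L hres J]
      omega
    have hA : latG M' L (E.image some) = g := by
      apply le_antisymm
      · obtain ⟨J, hJ, hval⟩ := latG_exists M K E
        calc latG M' L (E.image some) ≤ latF M' L (J.image some) :=
              latG_le (Finset.image_subset_image hJ)
          _ = latF M K J := hFimg J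
          _ = g := hval.symm
      · obtain ⟨J', hJ', hval⟩ := latG_exists M' L (E.image some)
        obtain ⟨J, hJE, rfl⟩ := Finset.subset_image_iff.mp hJ'
        rw [hval, hFimg J]
        exact latG_le hJE
    have hB : latB M' L E' none = q + g' := by
      apply le_antisymm
      · obtain ⟨J, hJ, hval⟩ := latG_exists M (fun w => K w + 2 * e w) E
        have hsub : J.image some ⊆ E'.erase none := by
          rw [hEr]; exact Finset.image_subset_image hJ
        calc latB M' L E' none ≤ latF M' L (insert none (J.image some)) := latB_le hsub
          _ = q + latF M (fun w => K w + 2 * e w) J := hF2 J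
          _ = q + g' := by rw [← hval]
      · obtain ⟨I, hI, hval⟩ := latB_exists M' L E' none
        rw [hEr] at hI
        obtain ⟨J, hJE, rfl⟩ := Finset.subset_image_iff.mp hI
        rw [hval, hF2 J]
        exact add_le_add (le_refl q) (latG_le hJE)
    have hC : latG M' L E' = min g (q + g') := by
      apply le_antisymm
      · apply le_min
        · obtain ⟨J, hJ, hval⟩ := latG_exists M K E
          have hsub : J.image some ⊆ E' :=
            (Finset.image_subset_image hJ).trans (Finset.subset_insert _ _)
          calc latG M' L E' ≤ latF M' L (J.image some) := latG_le hsub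
            _ = latF M K J := hFimg J
            _ = g := hval.symm
        · obtain ⟨J, hJ, hval⟩ := latG_exists M (fun w => K w + 2 * e w) E
          have hsub : insert none (J.image some) ⊆ E' := by
            rw [hE']
            exact Finset.insert_subset_insert _ (Finset.image_subset_image hJ)
          calc latG M' L E' ≤ latF M' L (insert none (J.image some)) := latG_le hsub
            _ = q + latF M (fun w => K w + 2 * e w) J := hF2 J
            _ = q + g' := by rw [← hval]
      · obtain ⟨I, hIE', hval⟩ := latG_exists M' L E'
        rw [hval]
        by_cases hn : none ∈ I
        · have h1 : I.erase none ⊆ E'.erase none := Finset.erase_subset_erase _ hIE'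
          have h2 : latB M' L E' none ≤ latF M' L I := by
            have := latB_le (M := M') (K := L) h1
            rwa [Finset.insert_erase hn] at this
          exact le_trans (min_le_right _ _) (hB ▸ h2)
        · have hI2 : I ⊆ E.image some := by
            intro x hx
            rcases Finset.mem_insert.mp (hIE' hx) with h | h
            · exact absurd (h ▸ hx) hn
            · exact h
          obtain ⟨J, hJE, rfl⟩ := Finset.subset_image_iff.mp hI2
          have : g ≤ latF M' L (J.image some) := by rw [hFimg J]; exact latG_le hJE
          exact le_trans (min_le_left _ _) this
    refine ⟨q, hq, ?_, ?_⟩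
    · unfold lata; rw [hEr, hA, hC]
    · unfold latb; rw [hB, hC]
  have key : ∀ L : Option V → ℤ, IsChar M' L → (∀ v, L (some v) = K v) →
      ((lata M' L E' none = 0 ∧ latb M' L E' none = 0) ↔
        L none = -m₀ + 2 * g - 2 * g') := by
    intro L h1 h2
    obtain ⟨q, hq, ha, hb⟩ := core L h1 h2
    rw [ha, hb]
    rcases le_total g (q + g') with h | h
    · rw [min_eq_left h]; omega
    · rw [min_eq_right h]; omega
  have hL0res : ∀ v, LextV M e m₀ K E (some v) = K v := fun v => rfl
  have hL0none : LextV M e m₀ K E none = -m₀ + 2 * g - 2 * g' := rfl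
  have hL0char : IsChar M' (LextV M e m₀ K E) := by
    rintro (_ | v)
    · rw [show M' none none = m₀ from rfl, hL0none]
      unfold Int.ModEq
      omega
    · exact hK v
  have hL0ab := (key _ hL0char hL0res).mpr hL0none
  refine ⟨⟨LextV M e m₀ K E, ⟨hL0char, hL0res, hL0ab.1, hL0ab.2⟩, ?_⟩, ?_, ?_⟩
  · rintro L ⟨hc, hr, ha, hb⟩
    funext x
    cases x with
    | none =>
      rw [(key L hc hr).mp ⟨ha, hb⟩, hL0none]
    | some v => rw [hr v, hL0res v]
  · intro L hc hr ha hb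
    exact (key L hc hr).mp ⟨ha, hb⟩
  · unfold Int.ModEq
    omega
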